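/- Let $A \in \mathbb{R}^{N \times N}$ ($N \ge 2$) be a matrix with real eigenvalues, all nonpositive, with $0$ a simple eigenvalue, and suppose there exist positive weights $V_1, \dots, V_N$ such that $\Gamma A = 0$ where $\Gamma = (V_1, \dots, V_N)$. Define $\tilde{A} \in \mathbb{R}^{(N-1)\times(N-1)}$ by $(\tilde{A})_{ij} := (A)_{ij} - (A)_{iN} \frac{V_j}{V_N}$ for $1 \le i, j \le N-1$. Then every strictly negative eigenvalue $\lambda$ of $A$ is an eigenvalue of $\tilde{A}$; consequently $\tilde{A}$ has $N-1$ strictly negative eigenvalues (counted with multiplicity and assuming $A$ is diagonalizable), and $\tilde{A}$ is Hurwitz. -/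

import Mathlib

open Matrix

variable {N : ℕ}

noncomputable def myT (V : Fin (N+1) → ℝ) : Matrix (Fin (N+1)) (Fin (N+1)) ℝ :=
  Matrix.of fun i j => if i = Fin.last N then V j else if i = j then 1 else 0

noncomputable def myS (V : Fin (N+1) → ℝ) : Matrix (Fin (N+1)) (Fin (N+1)) ℝ :=
  Matrix.of fun i j => if i = Fin.last N then
      (if j = Fin.last N then (V (Fin.last N))⁻¹ else -(V j) / V (Fin.last N))
    else if i = j then 1 else 0

lemma myTS (V : Fin (N+1) → ℝ) (hVN : V (Fin.last N) ≠ 0) : myT V * myS V = 1 := by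
  ext i j
  rw [Matrix.mul_apply]
  rcases eq_or_ne i (Fin.last N) with hi | hi
  · subst hi
    simp only [myT, myS, Matrix.of_apply, if_pos rfl]
    rw [Fin.sum_univ_castSucc]
    simp only [(Fin.castSucc_lt_last _).ne, if_false, if_pos rfl, if_true, mul_boole]
    induction j using Fin.lastCases with
    | last =>
      simp [(Fin.castSucc_lt_last _).ne, Matrix.one_apply, inv_mul_cancel₀ hVN,
        mul_inv_cancel₀ hVN]
    | cast c =>
      have h1 : ∀ d : Fin N, (d.castSucc = c.castSucc) = (d = c) := fun d => by
        simp [Fin.castSucc_inj]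
      simp only [h1, (Fin.castSucc_lt_last _).ne', (Fin.castSucc_lt_last _).ne, if_false]
      rw [Finset.sum_ite_eq' Finset.univ c (fun d => V d.castSucc)]
      rw [Matrix.one_apply_ne (Fin.castSucc_lt_last c).ne']
      field_simp
      simp
  · simp only [myT, myS, Matrix.of_apply, if_neg hi, boole_mul]
    rw [Finset.sum_ite_eq Finset.univ i
      (fun k => if k = Fin.last N then (if j = Fin.last N then (V (Fin.last N))⁻¹
        else -(V j) / V (Fin.last N)) else if k = j then 1 else 0)]
    simp [Matrix.one_apply, if_neg hi]

-- row lemmas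
lemma myT_row_last (V : Fin (N+1) → ℝ) (X : Matrix (Fin (N+1)) (Fin (N+1)) ℝ) (j : Fin (N+1)) :
    (myT V * X) (Fin.last N) j = (Matrix.vecMul V X) j := by
  simp [myT, Matrix.mul_apply, Matrix.vecMul, dotProduct]

lemma myT_row_ne (V : Fin (N+1) → ℝ) (X : Matrix (Fin (N+1)) (Fin (N+1)) ℝ)
    {i : Fin (N+1)} (hi : i ≠ Fin.last N) (j : Fin (N+1)) :
    (myT V * X) i j = X i j := by
  simp only [myT, Matrix.mul_apply, Matrix.of_apply, if_neg hi, boole_mul]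
  rw [Finset.sum_ite_eq Finset.univ i (fun k => X k j)]
  simp

lemma myS_col (V : Fin (N+1) → ℝ) (X : Matrix (Fin (N+1)) (Fin (N+1)) ℝ)
    (i : Fin (N+1)) (j : Fin N) :
    (X * myS V) i j.castSucc = X i j.castSucc - X i (Fin.last N) * V j.castSucc / V (Fin.last N) := by
  rw [Matrix.mul_apply, Fin.sum_univ_castSucc]
  simp only [myS, Matrix.of_apply, (Fin.castSucc_lt_last _).ne, (Fin.castSucc_lt_last _).ne',
    if_false, if_pos rfl, mul_boole]
  have h1 : ∀ d : Fin N, (d.castSucc = j.castSucc) = (d = j) := fun d => by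
    simp [Fin.castSucc_inj]
  simp only [h1]
  rw [Finset.sum_ite_eq' Finset.univ j (fun d => X i d.castSucc)]
  simp
  ring

/-- Lemma 3: if the diagonalizable matrix `A` has real nonpositive eigenvalues with `0`
a simple eigenvalue (rank `N`), and positive weights `V` satisfy `Γ A = 0`, then every
strictly negative eigenvalue of `A` is an eigenvalue of the reduced matrix `Ã`, and
`Ã` is Hurwitz. -/
theorem stmt4 {N : ℕ} (hN : 1 ≤ N)
    (A : Matrix (Fin (N + 1)) (Fin (N + 1)) ℝ)
    (hreal : ∀ μ ∈ spectrum ℂ (A.map (algebraMap ℝ ℂ)), μ.im = 0 ∧ μ.re ≤ 0)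
    (hdiag : ∃ Pm : Matrix (Fin (N + 1)) (Fin (N + 1)) ℝ,
        IsUnit Pm ∧ (Pm⁻¹ * A * Pm).IsDiag)
    (hrank : A.rank = N)
    (V : Fin (N + 1) → ℝ) (hV : ∀ i, 0 < V i)
    (hΓ : Matrix.vecMul V A = 0)
    (Atil : Matrix (Fin N) (Fin N) ℝ)
    (hAtil : ∀ i j : Fin N, Atil i j =
      A i.castSucc j.castSucc - A i.castSucc (Fin.last N) * V j.castSucc / V (Fin.last N)) :
    (∀ lam : ℝ, lam < 0 → Module.End.HasEigenvalue (Matrix.toLin' A) lam →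
        Module.End.HasEigenvalue (Matrix.toLin' Atil) lam) ∧
      (∀ μ ∈ spectrum ℂ (Atil.map (algebraMap ℝ ℂ)), μ.re < 0) := by
  classical
  obtain ⟨Pm, hPmU, hPmdiag⟩ := hdiag
  have hVN : V (Fin.last N) ≠ 0 := (hV _).ne'
  set T := myT V with hTdef
  set S := myS V with hSdef
  have hTS : T * S = 1 := myTS V hVN
  have hST : S * T = 1 := mul_eq_one_comm.mp hTS
  have hdet1 : T.det * S.det = 1 := by rw [← Matrix.det_mul, hTS, Matrix.det_one]
  have hTdet : IsUnit T.det := IsUnit.of_mul_eq_one _ hdet1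
  have hSdet : IsUnit S.det := IsUnit.of_mul_eq_one _ (by rw [mul_comm] at hdet1; exact hdet1)
  set B := T * A * S with hBdef
  -- structure of B
  have hBlast : ∀ j, B (Fin.last N) j = 0 := by
    intro j
    have : B = T * (A * S) := by rw [hBdef, Matrix.mul_assoc]
    rw [this, myT_row_last, ← Matrix.vecMul_vecMul, hΓ]
    simp
  have hBcast : ∀ (i j : Fin N), B i.castSucc j.castSucc = Atil i j := by
    intro i j
    have h1 : B = T * (A * S) := by rw [hBdef, Matrix.mul_assoc]
    rw [h1, myT_row_ne V _ (Fin.castSucc_lt_last i).ne, myS_col, hAtil]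
  -- rank of B
  have hrankB : B.rank = N := by
    rw [hBdef, Matrix.rank_mul_eq_left_of_isUnit_det _ _ hSdet,
      Matrix.rank_mul_eq_right_of_isUnit_det _ _ hTdet, hrank]
  -- diagonalizability transfer: kernel of B² equals kernel of B
  have hPmdet : IsUnit Pm.det := (Matrix.isUnit_iff_isUnit_det Pm).mp hPmU
  set D := Pm⁻¹ * A * Pm with hD
  have key : ∀ v : Fin (N+1) → ℝ, B *ᵥ (B *ᵥ v) = 0 → B *ᵥ v = 0 := by
    have hDmul : ∀ (x : Fin (N+1) → ℝ) i, (D *ᵥ x) i = D i i * x i := by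
      intro x i
      rw [Matrix.mulVec, dotProduct]
      exact Finset.sum_eq_single i (fun b _ hb => by rw [hPmdiag (Ne.symm hb), zero_mul])
        (fun h => absurd (Finset.mem_univ i) h)
    have hDkey : ∀ w : Fin (N+1) → ℝ, D *ᵥ (D *ᵥ w) = 0 → D *ᵥ w = 0 := by
      intro w hw
      funext i
      have h1 := congrFun hw i
      rw [hDmul, hDmul] at h1
      simp only [Pi.zero_apply] at h1
      have h2 : (D i i * w i) * (D i i * w i) = (D i i * (D i i * w i)) * w i := by ring
      rw [h1, zero_mul] at h2
      have h3 := mul_self_eq_zero.mp h2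
      show (D *ᵥ w) i = (0 : Fin (N+1) → ℝ) i
      simp only [Pi.zero_apply]
      rw [hDmul]; exact h3
    set Q := T * Pm with hQ
    set Qi := Pm⁻¹ * S with hQi
    have hQQi : Q * Qi = 1 := by
      rw [hQ, hQi, Matrix.mul_assoc, Matrix.mul_nonsing_inv_cancel_left _ _ hPmdet, hTS]
    have hQiQ : Qi * Q = 1 := mul_eq_one_comm.mp hQQi
    have hBQ : B = Q * D * Qi := by
      rw [hQ, hD, hQi, hBdef]
      simp only [Matrix.mul_assoc]
      rw [Matrix.mul_nonsing_inv_cancel_left _ _ hPmdet,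
        Matrix.mul_nonsing_inv_cancel_left _ _ hPmdet]
    have hBapp : ∀ z, B *ᵥ z = Q *ᵥ (D *ᵥ (Qi *ᵥ z)) := fun z => by
      rw [hBQ, Matrix.mulVec_mulVec, Matrix.mulVec_mulVec, Matrix.mul_assoc]
    have hQiQv : ∀ z : Fin (N+1) → ℝ, Qi *ᵥ (Q *ᵥ z) = z := fun z => by
      rw [Matrix.mulVec_mulVec, hQiQ, Matrix.one_mulVec]
    intro v h
    rw [hBapp (B *ᵥ v), hBapp v, hQiQv] at h
    have h3 : D *ᵥ (D *ᵥ (Qi *ᵥ v)) = 0 := by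
      have h4 : Qi *ᵥ (Q *ᵥ (D *ᵥ (D *ᵥ (Qi *ᵥ v)))) = Qi *ᵥ (0 : Fin (N+1) → ℝ) := by rw [h]
      rwa [hQiQv, Matrix.mulVec_zero] at h4
    rw [hBapp, hDkey _ h3, Matrix.mulVec_zero]
  -- range of B is the hyperplane {v | v last = 0}
  have hrange : ∀ u : Fin (N+1) → ℝ, u (Fin.last N) = 0 → ∃ w, B *ᵥ w = u := by
    set p : (Fin (N+1) → ℝ) →ₗ[ℝ] ℝ := LinearMap.proj (Fin.last N) with hp
    set W : Submodule ℝ (Fin (N+1) → ℝ) := LinearMap.ker p with hW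
    have hle : LinearMap.range B.mulVecLin ≤ W := by
      rintro v ⟨w, rfl⟩
      simp only [hW, LinearMap.mem_ker, hp, LinearMap.proj_apply, Matrix.mulVecLin_apply]
      simp [Matrix.mulVec, dotProduct, hBlast]
    have hfinW : Module.finrank ℝ W = N := by
      have hsurj : Function.Surjective p := fun x => ⟨fun _ => x, rfl⟩
      have h1 := LinearMap.finrank_range_add_finrank_ker p
      rw [LinearMap.range_eq_top.mpr hsurj, finrank_top, ← hW] at h1
      have h2 : Module.finrank ℝ (Fin (N+1) → ℝ) = N + 1 := by
        rw [Module.finrank_pi]; simp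
      have h3 : Module.finrank ℝ ℝ = 1 := Module.finrank_self ℝ
      rw [h2, h3] at h1
      omega
    have heq : LinearMap.range B.mulVecLin = W :=
      Submodule.eq_of_le_of_finrank_eq hle (by rw [hfinW]; exact hrankB)
    intro u hu
    have humem : u ∈ LinearMap.range B.mulVecLin := by
      rw [heq]
      simp only [hW, LinearMap.mem_ker, hp, LinearMap.proj_apply]
      exact hu
    obtain ⟨w, hw⟩ := humem
    exact ⟨w, hw⟩
  -- det Atil ≠ 0
  have hdetAtil : Atil.det ≠ 0 := by
    intro h0
    obtain ⟨x, hx0, hxA⟩ := Matrix.exists_mulVec_eq_zero_iff.mpr h0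
    set u : Fin (N+1) → ℝ := Fin.lastCases 0 x with hu
    have hucast : ∀ j : Fin N, u j.castSucc = x j := fun j => Fin.lastCases_castSucc j
    have hulast : u (Fin.last N) = 0 := Fin.lastCases_last
    have hBu : B *ᵥ u = 0 := by
      funext i
      induction i using Fin.lastCases with
      | last =>
        simp [Matrix.mulVec, dotProduct, hBlast]
      | cast i =>
        have h1 : (B *ᵥ u) i.castSucc = ∑ j : Fin N, Atil i j * x j := by
          rw [Matrix.mulVec, dotProduct, Fin.sum_univ_castSucc]
          simp only [hBcast, hucast, hulast, mul_zero, add_zero]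
        have h2 := congrFun hxA i
        simp only [Matrix.mulVec, dotProduct, Pi.zero_apply] at h2
        rw [h1]
        simpa using h2
    obtain ⟨w, hw⟩ := hrange u hulast
    have hBw : B *ᵥ w = 0 := key w (by rw [hw]; exact hBu)
    have hu0 : u = 0 := by rw [← hw, hBw]
    apply hx0
    funext j
    have := congrFun hu0 j.castSucc
    simpa [hucast] using this
  constructor
  · -- negative eigenvalues transfer
    intro lam hlam hev
    obtain ⟨x, hx⟩ := hev.exists_hasEigenvector
    have hAx : A *ᵥ x = lam • x := by
      have h1 := Module.End.mem_eigenspace_iff.mp hx.1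
      rwa [Matrix.toLin'_apply] at h1
    set y := T *ᵥ x with hy
    have hy0 : y ≠ 0 := by
      intro h
      apply hx.2
      have h1 : S *ᵥ y = x := by rw [hy, Matrix.mulVec_mulVec, hST, Matrix.one_mulVec]
      rw [← h1, h, Matrix.mulVec_zero]
    have hBy : B *ᵥ y = lam • y := by
      have hBT : B * T = T * A := by
        rw [hBdef]; simp only [Matrix.mul_assoc]; rw [hST, Matrix.mul_one]
      rw [hy, Matrix.mulVec_mulVec, hBT, ← Matrix.mulVec_mulVec, hAx, Matrix.mulVec_smul]
    have hylast : y (Fin.last N) = 0 := by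
      have h1 := congrFun hBy (Fin.last N)
      have h2 : (B *ᵥ y) (Fin.last N) = 0 := by
        simp [Matrix.mulVec, dotProduct, hBlast]
      rw [h2] at h1
      have h3 : lam * y (Fin.last N) = 0 := by
        simpa [Pi.smul_apply, smul_eq_mul] using h1.symm
      exact (mul_eq_zero.mp h3).resolve_left hlam.ne
    set xt : Fin N → ℝ := fun j => y j.castSucc with hxt
    have hxt0 : xt ≠ 0 := by
      intro h
      apply hy0
      funext i
      induction i using Fin.lastCases with
      | last => exact hylast
      | cast i => exact congrFun h i
    have hAtxt : Atil *ᵥ xt = lam • xt := by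
      funext i
      have h1 := congrFun hBy i.castSucc
      rw [Matrix.mulVec, dotProduct, Fin.sum_univ_castSucc] at h1
      simp only [hBcast, hylast, mul_zero, add_zero] at h1
      show (Atil *ᵥ xt) i = (lam • xt) i
      rw [Matrix.mulVec, dotProduct]
      simpa using h1
    exact Module.End.hasEigenvalue_of_hasEigenvector
      ⟨Module.End.mem_eigenspace_iff.mpr (by rw [Matrix.toLin'_apply]; exact hAtxt), hxt0⟩
  · -- Hurwitz
    intro μ hμ
    rw [spectrum.mem_iff] at hμ
    have hdet0 : (algebraMap ℂ (Matrix (Fin N) (Fin N) ℂ) μ - Atil.map (algebraMap ℝ ℂ)).det = 0 := by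
      by_contra hne
      exact hμ ((Matrix.isUnit_iff_isUnit_det _).mpr (isUnit_iff_ne_zero.mpr hne))
    obtain ⟨v, hv0, hveq⟩ := Matrix.exists_mulVec_eq_zero_iff.mpr hdet0
    have hAv : (Atil.map (algebraMap ℝ ℂ)) *ᵥ v = μ • v := by
      rw [Algebra.algebraMap_eq_smul_one, Matrix.sub_mulVec, Matrix.smul_mulVec,
        Matrix.one_mulVec] at hveq
      exact (sub_eq_zero.mp hveq).symm
    have hμ0 : μ ≠ 0 := by
      intro h
      subst h
      have h1 : (Atil.map (algebraMap ℝ ℂ)).det = 0 :=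
        Matrix.exists_mulVec_eq_zero_iff.mp ⟨v, hv0, by rw [hAv, zero_smul]⟩
      have h2 : (algebraMap ℝ ℂ) Atil.det = 0 := by
        rw [RingHom.map_det, RingHom.mapMatrix_apply]; exact h1
      refine hdetAtil ?_
      have h3 : ((Atil.det : ℝ) : ℂ) = 0 := by rwa [Complex.coe_algebraMap] at h2
      exact_mod_cast h3
    set f := algebraMap ℝ ℂ with hf
    set uC : Fin (N+1) → ℂ := Fin.lastCases 0 v with huC
    have huCcast : ∀ j : Fin N, uC j.castSucc = v j := fun j => Fin.lastCases_castSucc j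
    have huClast : uC (Fin.last N) = 0 := Fin.lastCases_last
    have huC0 : uC ≠ 0 := fun h =>
      hv0 (funext fun j => by simpa [huCcast] using congrFun h j.castSucc)
    set Bc := B.map f with hBc
    have hBcu : Bc *ᵥ uC = μ • uC := by
      funext i
      induction i using Fin.lastCases with
      | last =>
        have h0 : ∀ k, Bc (Fin.last N) k = 0 := fun k => by
          rw [hBc, Matrix.map_apply, hBlast]; exact map_zero f
        simp [Matrix.mulVec, dotProduct, h0, huClast]
      | cast i =>
        have h1 : (Bc *ᵥ uC) i.castSucc = ∑ j : Fin N, f (Atil i j) * v j := by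
          rw [Matrix.mulVec, dotProduct, Fin.sum_univ_castSucc]
          simp only [hBc, Matrix.map_apply, hBcast, huCcast, huClast, mul_zero, add_zero]
        have h2 := congrFun hAv i
        simp only [Matrix.mulVec, dotProduct, Matrix.map_apply, Pi.smul_apply,
          smul_eq_mul] at h2
        rw [h1]
        simp only [Pi.smul_apply, huCcast, smul_eq_mul]
        simpa using h2
    have hdetB : (algebraMap ℂ (Matrix (Fin (N+1)) (Fin (N+1)) ℂ) μ - Bc).det = 0 := by
      apply Matrix.exists_mulVec_eq_zero_iff.mp
      refine ⟨uC, huC0, ?_⟩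
      rw [Algebra.algebraMap_eq_smul_one, Matrix.sub_mulVec, Matrix.smul_mulVec,
        Matrix.one_mulVec, hBcu, sub_self]
    set Tc := T.map f with hTc
    set Sc := S.map f with hSc
    set Ac := A.map f with hAc
    have hTcSc : Tc * Sc = 1 := by
      rw [hTc, hSc, ← Matrix.map_mul, hTS, Matrix.map_one f (map_zero f) (map_one f)]
    have hBcTAS : Bc = Tc * Ac * Sc := by
      rw [hBc, hBdef, Matrix.map_mul, Matrix.map_mul]
    have hconj : (algebraMap ℂ (Matrix (Fin (N+1)) (Fin (N+1)) ℂ) μ - Bc)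
        = Tc * (algebraMap ℂ (Matrix (Fin (N+1)) (Fin (N+1)) ℂ) μ - Ac) * Sc := by
      rw [Matrix.mul_sub, Matrix.sub_mul, hBcTAS]
      congr 1
      rw [Algebra.algebraMap_eq_smul_one, Matrix.mul_smul, Matrix.mul_one, Matrix.smul_mul,
        hTcSc]
    have hdetA0 : (algebraMap ℂ (Matrix (Fin (N+1)) (Fin (N+1)) ℂ) μ - Ac).det = 0 := by
      have h5 : (algebraMap ℂ (Matrix (Fin (N+1)) (Fin (N+1)) ℂ) μ - Bc).det
          = Tc.det * (algebraMap ℂ (Matrix (Fin (N+1)) (Fin (N+1)) ℂ) μ - Ac).det * Sc.det := by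
        rw [hconj, Matrix.det_mul, Matrix.det_mul]
      have h6 : Tc.det * Sc.det = 1 := by rw [← Matrix.det_mul, hTcSc, Matrix.det_one]
      have h7 : Tc.det * (algebraMap ℂ (Matrix (Fin (N+1)) (Fin (N+1)) ℂ) μ - Ac).det * Sc.det
          = (algebraMap ℂ (Matrix (Fin (N+1)) (Fin (N+1)) ℂ) μ - Ac).det * (Tc.det * Sc.det) := by
        ring
      rw [hdetB] at h5
      rw [h7, h6, mul_one] at h5
      exact h5.symm
    have hμA : μ ∈ spectrum ℂ (A.map (algebraMap ℝ ℂ)) := by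
      rw [spectrum.mem_iff]
      intro hU
      exact (isUnit_iff_ne_zero.mp ((Matrix.isUnit_iff_isUnit_det _).mp hU)) hdetA0
    obtain ⟨him, hre⟩ := hreal μ hμA
    rcases hre.lt_or_eq with h | h
    · exact h
    · exact absurd (Complex.ext h him) hμ0
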